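/- For n ≥ 2, the Cai–Fürer–Immerman graphs CFI(G_{n,n}) and ~CFI(G_{n,n}) built over the n×n grid have treewidth at most 2n+5. -/

import Mathlib

open SimpleGraph
open scoped Classical

/-- The `n × n` grid graph: vertices at `L1`-distance `1` are adjacent. -/
def grid (n : ℕ) : SimpleGraph (Fin n × Fin n) :=
  SimpleGraph.fromRel (fun a b =>
    (a.1 = b.1 ∧ a.2.val + 1 = b.2.val) ∨ (a.2 = b.2 ∧ a.1.val + 1 = b.1.val))

/-- Pair vertices `a(v,w)` (Bool `false`) and `b(v,w)` (Bool `true`) of the CFI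
construction, one pair for every directed edge `(v,w)` of `G`. -/
abbrev CFIPair {V : Type*} (G : SimpleGraph V) :=
  {q : Bool × V × V // G.Adj q.2.1 q.2.2}

/-- Middle vertices `m_A` of the CFI construction: for each vertex `v` and each
even-cardinality subset `A` of the neighbours of `v`. -/
abbrev CFIMid {V : Type*} (G : SimpleGraph V) :=
  {m : V × Set V // m.2 ⊆ G.neighborSet m.1 ∧ Even m.2.ncard}

abbrev CFIVert {V : Type*} (G : SimpleGraph V) := CFIPair G ⊕ CFIMid G

/-- The Cai–Fürer–Immerman graph `CFI_T(G)`: each vertex `v` of `G` is replaced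
by the gadget `X_{E(v)}` (middle vertex `m_{(v,A)}` is adjacent to `a(v,w)` for
`w ∈ A` and to `b(v,w)` for `w ∉ A`), and for each edge `vw ∉ T` the edges
`a(v,w)a(w,v)`, `b(v,w)b(w,v)` are added, while for `vw ∈ T` the twisted edges
`a(v,w)b(w,v)`, `b(v,w)a(w,v)` are added. -/
def CFI {V : Type*} (G : SimpleGraph V) (T : Set (Sym2 V)) : SimpleGraph (CFIVert G) :=
  SimpleGraph.fromRel (fun x y =>
    match x, y with
    | Sum.inr m, Sum.inl p =>
        p.val.2.1 = m.val.1 ∧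
        ((p.val.1 = false ∧ p.val.2.2 ∈ m.val.2) ∨ (p.val.1 = true ∧ p.val.2.2 ∉ m.val.2))
    | Sum.inl p, Sum.inl q =>
        p.val.2.1 = q.val.2.2 ∧ p.val.2.2 = q.val.2.1 ∧
        ((s(p.val.2.1, p.val.2.2) ∉ T ∧ p.val.1 = q.val.1) ∨
         (s(p.val.2.1, p.val.2.2) ∈ T ∧ p.val.1 ≠ q.val.1))
    | _, _ => False)

/-- A tree decomposition of a graph `G` with bags indexed by `ι`. -/
structure TreeDecomp {V : Type*} (G : SimpleGraph V) (ι : Type*) where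
  T : SimpleGraph ι
  tree : T.IsTree
  bag : ι → Set V
  bags_connected : ∀ v : V, (T.induce {i | v ∈ bag i}).Connected
  edge_subset : ∀ u v, G.Adj u v → ∃ i, u ∈ bag i ∧ v ∈ bag i

namespace CFIProof

/-! ### Grid arithmetic -/

variable {n : ℕ}

def tm (v : Fin n × Fin n) : ℕ := n * v.1.val + v.2.val

lemma tm_inj {u v : Fin n × Fin n} (h : tm u = tm v) : u = v := by
  obtain ⟨⟨a, ha⟩, ⟨b, hb⟩⟩ := u; obtain ⟨⟨c, hc⟩, ⟨d, hd⟩⟩ := v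
  simp only [tm] at h
  have hac : a = c := by
    rcases Nat.lt_trichotomy a c with h' | h' | h'
    · exfalso; have := Nat.mul_le_mul_left n h'
      rw [Nat.mul_succ] at this; omega
    · exact h'
    · exfalso; have := Nat.mul_le_mul_left n h'
      rw [Nat.mul_succ] at this; omega
  subst hac
  simp only [Prod.mk.injEq, Fin.mk.injEq]
  exact ⟨trivial, by omega⟩

lemma adj_cases {u v : Fin n × Fin n} (h : (grid n).Adj u v) :
    (u.1 = v.1 ∧ (tm v = tm u + 1 ∨ tm u = tm v + 1)) ∨
    (u.2 = v.2 ∧ (tm v = tm u + n ∨ tm u = tm v + n)) := by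
  rw [grid, fromRel_adj] at h
  obtain ⟨hne, h | h⟩ := h <;> rcases h with ⟨h1, h2⟩ | ⟨h1, h2⟩
  · exact Or.inl ⟨h1, Or.inl (by simp only [tm, h1]; omega)⟩
  · refine Or.inr ⟨h1, Or.inl ?_⟩
    have hm : n * v.1.val = n * u.1.val + n := by rw [← h2, Nat.mul_succ]
    simp only [tm, h1]; omega
  · exact Or.inl ⟨h1.symm, Or.inr (by simp only [tm, ← h1]; omega)⟩
  · refine Or.inr ⟨h1.symm, Or.inr ?_⟩
    have hm : n * u.1.val = n * v.1.val + n := by rw [← h2, Nat.mul_succ]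
    simp only [tm, ← h1]; omega

lemma adj_tm_ne {u v : Fin n × Fin n} (h : (grid n).Adj u v) : tm u ≠ tm v :=
  fun he => h.ne (tm_inj he)

lemma not_both {u v : Fin n × Fin n} (h : (grid n).Adj u v) (h1 : u.1 = v.1)
    (h2 : u.2 = v.2) : False := h.ne (Prod.ext h1 h2)

lemma nbr_unique {v w w' : Fin n × Fin n} (h : (grid n).Adj v w) (h' : (grid n).Adj v w')
    (hr : (v.1 = w.1) ↔ (v.1 = w'.1)) (ho : (tm w < tm v) ↔ (tm w' < tm v)) : w = w' := by
  rcases adj_cases h with ⟨e1, d1⟩ | ⟨e1, d1⟩ <;> rcases adj_cases h' with ⟨e2, d2⟩ | ⟨e2, d2⟩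
  · exact tm_inj (by omega)
  · exact absurd (hr.mp e1) (fun hc => not_both h' hc e2)
  · exact absurd (hr.mpr e2) (fun hc => not_both h hc e1)
  · have hn1 : tm w ≠ tm v := fun he => (adj_tm_ne h) he.symm
    have hn2 : tm w' ≠ tm v := fun he => (adj_tm_ne h') he.symm
    exact tm_inj (by omega)

lemma vert_window_unique {t : ℕ} {x y x' y' : Fin n × Fin n}
    (h : (grid n).Adj x y) (h' : (grid n).Adj x' y')
    (hv : x.2 = y.2) (hv' : x'.2 = y'.2) (hc : x.2 = x'.2)
    (h1 : tm x < t) (h2 : t ≤ tm y) (h1' : tm x' < t) (h2' : t ≤ tm y') :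
    x = x' ∧ y = y' := by
  have d1 : tm y = tm x + n := by
    rcases adj_cases h with ⟨e, _⟩ | ⟨_, d⟩
    · exact absurd hv (fun hc2 => not_both h e hc2)
    · omega
  have d2 : tm y' = tm x' + n := by
    rcases adj_cases h' with ⟨e, _⟩ | ⟨_, d⟩
    · exact absurd hv' (fun hc2 => not_both h' e hc2)
    · omega
  have hk : x.2.val = x'.2.val := by rw [hc]
  have hrow : x.1.val = x'.1.val := by
    have e1 : tm x = n * x.1.val + x.2.val := rfl
    have e2 : tm x' = n * x'.1.val + x'.2.val := rfl
    rcases Nat.lt_trichotomy x.1.val x'.1.val with hlt | heq | hlt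
    · exfalso; have := Nat.mul_le_mul_left n hlt
      rw [Nat.mul_succ] at this; omega
    · exact heq
    · exfalso; have := Nat.mul_le_mul_left n hlt
      rw [Nat.mul_succ] at this; omega
  have hx : x = x' := Prod.ext (Fin.ext hrow) hc
  exact ⟨hx, tm_inj (by rw [d1, d2, hx])⟩

lemma vert_cut_ne_start {t : ℕ} {x y x' : Fin n × Fin n}
    (h : (grid n).Adj x y) (hv : x.2 = y.2)
    (h1 : tm x < t) (h2 : t < tm y) (hx' : tm x' = t) (hcol : x'.2 = x.2) : False := by
  have d1 : tm y = tm x + n := by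
    rcases adj_cases h with ⟨e, _⟩ | ⟨_, d⟩
    · exact absurd hv (fun hc2 => not_both h e hc2)
    · omega
  have e1 : tm x = n * x.1.val + x.2.val := rfl
  have e2 : tm x' = n * x'.1.val + x.2.val := by simp only [tm, hcol]
  have l1 : x.1.val < x'.1.val := Nat.lt_of_mul_lt_mul_left (a := n) (by omega)
  have l2 : x'.1.val < x.1.val + 1 := by
    refine Nat.lt_of_mul_lt_mul_left (a := n) ?_
    rw [Nat.mul_succ]; omega
  omega

lemma horiz_no_strict {t : ℕ} {x y : Fin n × Fin n}
    (h : (grid n).Adj x y) (hh : x.1 = y.1) (h1 : tm x < t) (h2 : t < tm y) : False := by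
  rcases adj_cases h with ⟨_, d⟩ | ⟨e, _⟩
  · omega
  · exact not_both h hh e

/-! ### The tree -/

section TreePart

variable {L : Type} (att : L → ℕ)

def TrRel : (ℕ ⊕ L) → (ℕ ⊕ L) → Prop := fun a b =>
  (∃ i : ℕ, a = Sum.inl i ∧ b = Sum.inl (i + 1)) ∨
  (∃ m : L, a = Sum.inl (att m) ∧ b = Sum.inr m)

def Tr : SimpleGraph (ℕ ⊕ L) := fromRel (TrRel att)

lemma tr_adj_succ (i : ℕ) : (Tr att).Adj (Sum.inl i) (Sum.inl (i + 1)) := by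
  rw [Tr, fromRel_adj]
  exact ⟨by simp, Or.inl (Or.inl ⟨i, rfl, rfl⟩)⟩

lemma tr_adj_att (m : L) : (Tr att).Adj (Sum.inl (att m)) (Sum.inr m) := by
  rw [Tr, fromRel_adj]
  exact ⟨by simp, Or.inl (Or.inr ⟨m, rfl, rfl⟩)⟩

lemma tr_reach_zero (a : ℕ ⊕ L) : (Tr att).Reachable a (Sum.inl 0) := by
  have key : ∀ i : ℕ, (Tr att).Reachable (Sum.inl i) (Sum.inl 0) := by
    intro i
    induction i with
    | zero => exact Reachable.refl _
    | succ k ih => exact ((tr_adj_succ att k).reachable.symm).trans ih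
  cases a with
  | inl i => exact key i
  | inr m => exact ((tr_adj_att att m).reachable.symm).trans (key _)

lemma tr_connected : (Tr att).Connected := by
  haveI : Nonempty (ℕ ⊕ L) := ⟨Sum.inl 0⟩
  exact ⟨fun a b => (tr_reach_zero att a).trans (tr_reach_zero att b).symm⟩

lemma reach_inv {α : Type*} {H : SimpleGraph α} {f : α → Bool}
    (hf : ∀ a b, H.Adj a b → f a = f b) {a b : α} (h : H.Reachable a b) : f a = f b := by
  obtain ⟨w⟩ := h
  induction w with
  | nil => rfl
  | cons h p ih => exact (hf _ _ h).trans ih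

lemma tr_acyclic : (Tr att).IsAcyclic := by
  rw [isAcyclic_iff_forall_adj_isBridge]
  suffices H : ∀ a b : ℕ ⊕ L, TrRel att a b → (Tr att).IsBridge s(a, b) by
    intro a b hab
    rw [Tr, fromRel_adj] at hab
    rcases hab.2 with h | h
    · exact H a b h
    · rw [Sym2.eq_swap]; exact H b a h
  rintro a b (⟨i, rfl, rfl⟩ | ⟨m, rfl, rfl⟩)
  · rw [isBridge_iff]
    refine fun hreach => ?_
    set f : (ℕ ⊕ L) → Bool := fun x =>
      match x with
      | Sum.inl j => decide (j ≤ i)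
      | Sum.inr m => decide (att m ≤ i) with hfdef
    have hf : ∀ x y, ((Tr att) \ fromEdgeSet {s(Sum.inl i, Sum.inl (i+1))}).Adj x y →
        f x = f y := by
      have key : ∀ x y, TrRel att x y →
          s(x, y) ≠ s(Sum.inl (i:ℕ), Sum.inl (i+1)) → f x = f y := by
        rintro x y (⟨j, rfl, rfl⟩ | ⟨m, rfl, rfl⟩) hne
        · have hji : j ≠ i := by
            intro h; subst h; exact hne rfl
          simp only [hfdef]
          exact decide_eq_decide.mpr (by omega)
        · rfl
      intro x y hxy
      rw [sdiff_adj, fromEdgeSet_adj] at hxy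
      have hne : s(x, y) ≠ s(Sum.inl (i:ℕ), Sum.inl (i+1)) :=
        fun h => hxy.2 ⟨h ▸ Set.mem_singleton _, hxy.1.ne⟩
      have hadj := hxy.1
      rw [Tr, fromRel_adj] at hadj
      rcases hadj.2 with h | h
      · exact key x y h hne
      · exact (key y x h (by rwa [Sym2.eq_swap])).symm
    have := reach_inv hf hreach
    simp only [hfdef, decide_eq_decide] at this
    omega
  · rw [isBridge_iff]
    refine fun hreach => ?_
    set f : (ℕ ⊕ L) → Bool := fun x => decide (x = Sum.inr m) with hfdef
    have hf : ∀ x y, ((Tr att) \ fromEdgeSet {s(Sum.inl (att m), Sum.inr m)}).Adj x y →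
        f x = f y := by
      have key : ∀ x y, TrRel att x y →
          s(x, y) ≠ s(Sum.inl (att m), Sum.inr m) → f x = f y := by
        rintro x y (⟨j, rfl, rfl⟩ | ⟨m', rfl, rfl⟩) hne
        · simp [hfdef]
        · by_cases hm : m' = m
          · subst hm; exact absurd rfl hne
          · simp [hfdef, hm]
      intro x y hxy
      rw [sdiff_adj, fromEdgeSet_adj] at hxy
      have hne : s(x, y) ≠ s(Sum.inl (att m), Sum.inr m) :=
        fun h => hxy.2 ⟨h ▸ Set.mem_singleton _, hxy.1.ne⟩
      have hadj := hxy.1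
      rw [Tr, fromRel_adj] at hadj
      rcases hadj.2 with h | h
      · exact key x y h hne
      · exact (key y x h (by rwa [Sym2.eq_swap])).symm
    have := reach_inv hf hreach
    simp [hfdef] at this

lemma tr_isTree : (Tr att).IsTree := ⟨tr_connected att, tr_acyclic att⟩

lemma induce_connected (S : Set (ℕ ⊕ L)) (lo hi : ℕ) (hlh : lo ≤ hi)
    (h1 : ∀ i : ℕ, Sum.inl i ∈ S ↔ lo ≤ i ∧ i ≤ hi)
    (h2 : ∀ m : L, Sum.inr m ∈ S → lo ≤ att m ∧ att m ≤ hi) :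
    ((Tr att).induce S).Connected := by
  have hlo : Sum.inl lo ∈ S := (h1 lo).2 ⟨le_rfl, hlh⟩
  have main : ∀ i, lo ≤ i → i ≤ hi → ∀ (h : Sum.inl i ∈ S),
      ((Tr att).induce S).Reachable ⟨Sum.inl i, h⟩ ⟨Sum.inl lo, hlo⟩ := by
    intro i
    induction i with
    | zero =>
      intro h1' h2' h
      have : lo = 0 := by omega
      subst this; exact Reachable.refl _
    | succ k ih =>
      intro h1' h2' h
      rcases Nat.lt_or_ge lo (k+1) with hlt | hge
      · have hk : Sum.inl k ∈ S := (h1 k).2 ⟨by omega, by omega⟩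
        have hadj : ((Tr att).induce S).Adj ⟨Sum.inl (k+1), h⟩ ⟨Sum.inl k, hk⟩ := by
          simp only [comap_adj, Function.Embedding.coe_subtype]
          exact (tr_adj_succ att k).symm
        exact hadj.reachable.trans (ih (by omega) (by omega) hk)
      · have : lo = k + 1 := by omega
        subst this; exact Reachable.refl _
  rw [connected_iff]
  refine ⟨?_, ⟨⟨Sum.inl lo, hlo⟩⟩⟩
  · rintro ⟨a, ha⟩ ⟨b, hb⟩
    have toroot : ∀ (x : ℕ ⊕ L) (hx : x ∈ S),
        ((Tr att).induce S).Reachable ⟨x, hx⟩ ⟨Sum.inl lo, hlo⟩ := by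
      intro x hx
      cases x with
      | inl i => exact main i ((h1 i).1 hx).1 ((h1 i).1 hx).2 hx
      | inr m =>
        have hm := h2 m hx
        have hmem : Sum.inl (att m) ∈ S := (h1 _).2 hm
        have hadj : ((Tr att).induce S).Adj ⟨Sum.inr m, hx⟩ ⟨Sum.inl (att m), hmem⟩ := by
          simp only [comap_adj, Function.Embedding.coe_subtype]
          exact (tr_adj_att att m).symm
        exact hadj.reachable.trans (main _ hm.1 hm.2 hmem)
    exact (toroot a ha).trans (toroot b hb).symm

end TreePart

/-! ### The bags -/

def att0 (m : CFIMid (grid n)) : ℕ := 2 * tm m.val.1 + 1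

def cond (i : ℕ) (q : Bool × (Fin n × Fin n) × (Fin n × Fin n)) : Prop :=
  if i % 2 = 0 then
    ((tm q.2.1 < i / 2 ∧ i / 2 ≤ tm q.2.2) ∨ (tm q.2.1 = i / 2 ∧ tm q.2.2 < i / 2))
  else ((tm q.2.1 < i / 2 ∧ i / 2 < tm q.2.2) ∨ tm q.2.1 = i / 2)

def bag : (ℕ ⊕ CFIMid (grid n)) → Set (CFIVert (grid n))
  | Sum.inl i => Sum.inl '' {p : CFIPair (grid n) | cond i p.val}
  | Sum.inr m => insert (Sum.inr m) (Sum.inl '' {p : CFIPair (grid n) | p.val.2.1 = m.val.1})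

lemma mem_bag_inl {p : CFIPair (grid n)} {i : ℕ} :
    (Sum.inl p : CFIVert (grid n)) ∈ bag (Sum.inl i) ↔ cond i p.val := by
  constructor
  · rintro ⟨q, hq, he⟩
    cases Sum.inl_injective he
    exact hq
  · intro h; exact ⟨p, h, rfl⟩

lemma mem_bag_inr_pair {p : CFIPair (grid n)} {m : CFIMid (grid n)} :
    (Sum.inl p : CFIVert (grid n)) ∈ bag (Sum.inr m) ↔ p.val.2.1 = m.val.1 := by
  constructor
  · rintro (h | ⟨q, hq, he⟩)
    · exact absurd h (by simp)
    · cases Sum.inl_injective he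
      exact hq
  · intro h; exact Or.inr ⟨p, h, rfl⟩

lemma mem_bag_mid_inl {m : CFIMid (grid n)} {i : ℕ} :
    (Sum.inr m : CFIVert (grid n)) ∉ bag (Sum.inl i) := by
  rintro ⟨q, _, he⟩
  exact absurd he (by simp)

lemma mem_bag_mid_inr {m m' : CFIMid (grid n)} :
    (Sum.inr m : CFIVert (grid n)) ∈ bag (Sum.inr m') ↔ m = m' := by
  constructor
  · rintro (h | ⟨q, _, he⟩)
    · exact Sum.inr_injective h
    · exact absurd he (by simp)
  · rintro rfl; exact Or.inl rfl

/-! ### Edge coverage -/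

lemma pair_pair_cover (p q : CFIPair (grid n))
    (h1 : p.val.2.1 = q.val.2.2) (h2 : p.val.2.2 = q.val.2.1) :
    ∃ i, (Sum.inl p : CFIVert (grid n)) ∈ bag i ∧ (Sum.inl q : CFIVert (grid n)) ∈ bag i := by
  have e1 : tm q.val.2.2 = tm p.val.2.1 := by rw [h1]
  have e2 : tm q.val.2.1 = tm p.val.2.2 := by rw [h2]
  have hne : tm p.val.2.1 ≠ tm p.val.2.2 := adj_tm_ne p.2
  rcases Nat.lt_or_ge (tm p.val.2.1) (tm p.val.2.2) with hlt | hge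
  · refine ⟨Sum.inl (2 * tm p.val.2.2), ?_, ?_⟩ <;>
      rw [mem_bag_inl] <;> simp only [cond] <;> split_ifs with h' <;> omega
  · refine ⟨Sum.inl (2 * tm p.val.2.1), ?_, ?_⟩ <;>
      rw [mem_bag_inl] <;> simp only [cond] <;> split_ifs with h' <;> omega

lemma edge_cover (T : Set (Sym2 (Fin n × Fin n))) (u v : CFIVert (grid n))
    (h : (CFI (grid n) T).Adj u v) : ∃ i, u ∈ bag i ∧ v ∈ bag i := by
  rw [CFI, fromRel_adj] at h
  obtain ⟨hne, h | h⟩ := h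
  · cases u with
    | inl p =>
      cases v with
      | inl q =>
        obtain ⟨h1, h2, _⟩ := h
        exact pair_pair_cover p q h1 h2
      | inr m => exact h.elim
    | inr m =>
      cases v with
      | inl p =>
        obtain ⟨h1, _⟩ := h
        exact ⟨Sum.inr m, Or.inl rfl, mem_bag_inr_pair.2 h1⟩
      | inr m' => exact h.elim
  · cases u with
    | inl p =>
      cases v with
      | inl q =>
        obtain ⟨h1, h2, _⟩ := h
        obtain ⟨i, hi1, hi2⟩ := pair_pair_cover q p h1 h2
        exact ⟨i, hi2, hi1⟩
      | inr m =>
        obtain ⟨h1, _⟩ := h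
        exact ⟨Sum.inr m, mem_bag_inr_pair.2 h1, Or.inl rfl⟩
    | inr m =>
      cases v with
      | inl p => exact h.elim
      | inr m' => exact h.elim

/-! ### Bag connectivity -/

lemma bags_conn (x : CFIVert (grid n)) :
    ((Tr (att0 (n := n))).induce {i | x ∈ bag i}).Connected := by
  cases x with
  | inr m =>
    have hS : {i | (Sum.inr m : CFIVert (grid n)) ∈ bag i} = {Sum.inr m} := by
      ext i
      cases i with
      | inl j => simp [mem_bag_mid_inl]
      | inr m' =>
        simp only [Set.mem_setOf_eq, mem_bag_mid_inr, Set.mem_singleton_iff]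
        constructor
        · rintro rfl; rfl
        · rintro h; cases Sum.inr_injective h; rfl
    rw [hS]
    rw [connected_iff]
    refine ⟨?_, ⟨⟨Sum.inr m, rfl⟩⟩⟩
    rintro ⟨a, ha⟩ ⟨b, hb⟩
    simp only [Set.mem_singleton_iff] at ha hb
    subst ha; subst hb
    exact Reachable.refl _
  | inl p =>
    have hne : tm p.val.2.1 ≠ tm p.val.2.2 := adj_tm_ne p.2
    have hmid : ∀ m : CFIMid (grid n),
        Sum.inr m ∈ {i | (Sum.inl p : CFIVert (grid n)) ∈ bag i} →
        att0 m = 2 * tm p.val.2.1 + 1 := by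
      intro m hm
      have := mem_bag_inr_pair.1 hm
      rw [att0, ← this]
    rcases Nat.lt_or_ge (tm p.val.2.1) (tm p.val.2.2) with hlt | hge
    · refine induce_connected _ _ (2 * tm p.val.2.1 + 1) (2 * tm p.val.2.2) (by omega) ?_ ?_
      · intro i
        simp only [Set.mem_setOf_eq, mem_bag_inl, cond]
        split_ifs with h' <;> omega
      · intro m hm
        rw [hmid m hm]; omega
    · have hgt : tm p.val.2.2 < tm p.val.2.1 := by omega
      refine induce_connected _ _ (2 * tm p.val.2.1) (2 * tm p.val.2.1 + 1) (by omega) ?_ ?_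
      · intro i
        simp only [Set.mem_setOf_eq, mem_bag_inl, cond]
        split_ifs with h' <;> omega
      · intro m hm
        rw [hmid m hm]; omega

/-! ### Cardinality bounds -/

lemma pair_ext {p q : CFIPair (grid n)} (h1 : p.val.1 = q.val.1)
    (h2 : p.val.2.1 = q.val.2.1) (h3 : p.val.2.2 = q.val.2.2) : p = q :=
  Subtype.ext (Prod.ext h1 (Prod.ext h2 h3))

lemma ncard_le_two_of (s : Set (CFIPair (grid n)))
    (key : ∀ p ∈ s, ∀ q ∈ s, p.val.1 = q.val.1 → p = q) : s.ncard ≤ 2 := by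
  rw [← Nat.card_coe_set_eq]
  have hb : Nat.card Bool = 2 := by simp [Nat.card_eq_fintype_card]
  rw [← hb]
  exact Nat.card_le_card_of_injective (fun q : s => q.1.val.1)
    (fun a b h => Subtype.ext (key a.1 a.2 b.1 b.2 h))

lemma ncard_le_2n_of (s : Set (CFIPair (grid n)))
    (key : ∀ p ∈ s, ∀ q ∈ s, p.val.1 = q.val.1 → p.val.2.1.2 = q.val.2.1.2 → p = q) :
    s.ncard ≤ 2 * n := by
  rw [← Nat.card_coe_set_eq]
  have hb : Nat.card (Bool × Fin n) = 2 * n := by simp [Nat.card_eq_fintype_card]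
  rw [← hb]
  refine Nat.card_le_card_of_injective
    (fun q : s => ((q.1.val.1, q.1.val.2.1.2) : Bool × Fin n)) ?_
  intro a b h
  have h1 : a.1.val.1 = b.1.val.1 := congrArg (fun z : Bool × Fin n => z.1) h
  have h2 : a.1.val.2.1.2 = b.1.val.2.1.2 := congrArg (fun z : Bool × Fin n => z.2) h
  exact Subtype.ext (key a.1 a.2 b.1 b.2 h1 h2)

lemma cond_card (hn : 2 ≤ n) (i : ℕ) :
    ({p : CFIPair (grid n) | cond i p.val}).ncard ≤ 2 * n + 6 := by
  set t := i / 2 with ht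
  by_cases hpar : i % 2 = 0
  · -- even step
    set Q1 : Set (CFIPair (grid n)) :=
      {p | p.val.2.1.2 = p.val.2.2.2 ∧ tm p.val.2.1 < t ∧ t ≤ tm p.val.2.2} with hQ1
    set Q2 : Set (CFIPair (grid n)) :=
      {p | p.val.2.1.1 = p.val.2.2.1 ∧ tm p.val.2.1 < t ∧ t ≤ tm p.val.2.2} with hQ2
    set Q3 : Set (CFIPair (grid n)) :=
      {p | p.val.2.1.1 = p.val.2.2.1 ∧ tm p.val.2.1 = t ∧ tm p.val.2.2 < t} with hQ3
    set Q4 : Set (CFIPair (grid n)) :=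
      {p | p.val.2.1.2 = p.val.2.2.2 ∧ tm p.val.2.1 = t ∧ tm p.val.2.2 < t} with hQ4
    have hsub : {p : CFIPair (grid n) | cond i p.val} ⊆ Q1 ∪ (Q2 ∪ (Q3 ∪ Q4)) := by
      intro p hp
      rw [Set.mem_setOf_eq, cond, if_pos hpar] at hp
      rcases adj_cases p.2 with ⟨hh, _⟩ | ⟨hv, _⟩
      · rcases hp with ⟨ha, hb⟩ | ⟨ha, hb⟩
        · exact Or.inr (Or.inl ⟨hh, ha, hb⟩)
        · exact Or.inr (Or.inr (Or.inl ⟨hh, ha, hb⟩))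
      · rcases hp with ⟨ha, hb⟩ | ⟨ha, hb⟩
        · exact Or.inl ⟨hv, ha, hb⟩
        · exact Or.inr (Or.inr (Or.inr ⟨hv, ha, hb⟩))
    have b1 : Q1.ncard ≤ 2 * n := by
      refine ncard_le_2n_of _ ?_
      rintro p ⟨hv, h1, h2⟩ q ⟨hv', h1', h2'⟩ hc hcol
      obtain ⟨hx, hy⟩ := vert_window_unique p.2 q.2 hv hv' hcol h1 h2 h1' h2'
      exact pair_ext hc hx hy
    have b2 : Q2.ncard ≤ 2 := by
      refine ncard_le_two_of _ ?_
      rintro p ⟨hh, h1, h2⟩ q ⟨hh', h1', h2'⟩ hc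
      have dp : tm p.val.2.2 = tm p.val.2.1 + 1 := by
        rcases adj_cases p.2 with ⟨_, d⟩ | ⟨e, _⟩
        · omega
        · exact absurd hh (fun hc' => not_both p.2 hc' e)
      have dq : tm q.val.2.2 = tm q.val.2.1 + 1 := by
        rcases adj_cases q.2 with ⟨_, d⟩ | ⟨e, _⟩
        · omega
        · exact absurd hh' (fun hc' => not_both q.2 hc' e)
      have hy : p.val.2.2 = q.val.2.2 := tm_inj (by omega)
      have hadj' : (grid n).Adj p.val.2.2 q.val.2.1 := by rw [hy]; exact q.2.symm
      have hx : p.val.2.1 = q.val.2.1 := by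
        refine nbr_unique p.2.symm hadj' ?_ ?_
        · exact iff_of_true hh.symm (by rw [hy, ← hh'])
        · exact iff_of_true (by omega) (by omega)
      exact pair_ext hc hx hy
    have b3 : Q3.ncard ≤ 2 := by
      refine ncard_le_two_of _ ?_
      rintro p ⟨hh, h1, h2⟩ q ⟨hh', h1', h2'⟩ hc
      have hx : p.val.2.1 = q.val.2.1 := tm_inj (by omega)
      have hadj' : (grid n).Adj p.val.2.1 q.val.2.2 := by rw [hx]; exact q.2
      have hy : p.val.2.2 = q.val.2.2 := by
        refine nbr_unique p.2 hadj' ?_ ?_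
        · exact iff_of_true hh (by rw [hx]; exact hh')
        · exact iff_of_true (by omega) (by omega)
      exact pair_ext hc hx hy
    have b4 : Q4.ncard ≤ 2 := by
      refine ncard_le_two_of _ ?_
      rintro p ⟨hv, h1, h2⟩ q ⟨hv', h1', h2'⟩ hc
      have hx : p.val.2.1 = q.val.2.1 := tm_inj (by omega)
      have hadj' : (grid n).Adj p.val.2.1 q.val.2.2 := by rw [hx]; exact q.2
      have hy : p.val.2.2 = q.val.2.2 := by
        refine nbr_unique p.2 hadj' ?_ ?_
        · refine iff_of_false (fun hc' => not_both p.2 hc' hv) ?_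
          exact fun hc' => not_both hadj' hc' (by rw [hx] at hv ⊢; exact hv')
        · exact iff_of_true (by omega) (by omega)
      exact pair_ext hc hx hy
    calc ({p : CFIPair (grid n) | cond i p.val}).ncard
        ≤ (Q1 ∪ (Q2 ∪ (Q3 ∪ Q4))).ncard := Set.ncard_le_ncard hsub (Set.toFinite _)
      _ ≤ Q1.ncard + (Q2 ∪ (Q3 ∪ Q4)).ncard := Set.ncard_union_le _ _
      _ ≤ Q1.ncard + (Q2.ncard + (Q3 ∪ Q4).ncard) := by
          have := Set.ncard_union_le Q2 (Q3 ∪ Q4); omega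
      _ ≤ Q1.ncard + (Q2.ncard + (Q3.ncard + Q4.ncard)) := by
          have := Set.ncard_union_le Q3 Q4; omega
      _ ≤ 2 * n + 6 := by omega
  · -- odd step
    set P1 : Set (CFIPair (grid n)) :=
      {p | p.val.2.1.2 = p.val.2.2.2 ∧
        ((tm p.val.2.1 < t ∧ t < tm p.val.2.2) ∨
         (tm p.val.2.1 = t ∧ tm p.val.2.2 < tm p.val.2.1))} with hP1
    set P2 : Set (CFIPair (grid n)) :=
      {p | p.val.2.1.2 = p.val.2.2.2 ∧ tm p.val.2.1 = t ∧ tm p.val.2.1 < tm p.val.2.2} with hP2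
    set P3 : Set (CFIPair (grid n)) :=
      {p | p.val.2.1.1 = p.val.2.2.1 ∧ tm p.val.2.1 = t ∧ tm p.val.2.2 < tm p.val.2.1} with hP3
    set P4 : Set (CFIPair (grid n)) :=
      {p | p.val.2.1.1 = p.val.2.2.1 ∧ tm p.val.2.1 = t ∧ tm p.val.2.1 < tm p.val.2.2} with hP4
    have hsub : {p : CFIPair (grid n) | cond i p.val} ⊆ P1 ∪ (P2 ∪ (P3 ∪ P4)) := by
      intro p hp
      rw [Set.mem_setOf_eq, cond, if_neg hpar] at hp
      have hnetm : tm p.val.2.1 ≠ tm p.val.2.2 := adj_tm_ne p.2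
      rcases hp with ⟨ha, hb⟩ | ha
      · rcases adj_cases p.2 with ⟨hh, _⟩ | ⟨hv, _⟩
        · exact absurd (horiz_no_strict p.2 hh ha hb) (fun h => h)
        · exact Or.inl ⟨hv, Or.inl ⟨ha, hb⟩⟩
      · rcases adj_cases p.2 with ⟨hh, _⟩ | ⟨hv, _⟩
        · rcases Nat.lt_or_ge (tm p.val.2.2) (tm p.val.2.1) with ho | ho
          · exact Or.inr (Or.inr (Or.inl ⟨hh, ha, ho⟩))
          · exact Or.inr (Or.inr (Or.inr ⟨hh, ha, by omega⟩))
        · rcases Nat.lt_or_ge (tm p.val.2.2) (tm p.val.2.1) with ho | ho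
          · exact Or.inl ⟨hv, Or.inr ⟨ha, ho⟩⟩
          · exact Or.inr (Or.inl ⟨hv, ha, by omega⟩)
    have b1 : P1.ncard ≤ 2 * n := by
      refine ncard_le_2n_of _ ?_
      rintro p ⟨hv, hp⟩ q ⟨hv', hq⟩ hc hcol
      rcases hp with ⟨h1, h2⟩ | ⟨h1, h2⟩ <;> rcases hq with ⟨h1', h2'⟩ | ⟨h1', h2'⟩
      · obtain ⟨hx, hy⟩ :=
          vert_window_unique p.2 q.2 hv hv' hcol h1 (le_of_lt h2) h1' (le_of_lt h2')
        exact pair_ext hc hx hy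
      · exact absurd (vert_cut_ne_start p.2 hv h1 h2 h1' hcol.symm) (fun h => h)
      · exact absurd (vert_cut_ne_start q.2 hv' h1' h2' h1 hcol) (fun h => h)
      · have hx : p.val.2.1 = q.val.2.1 := tm_inj (by omega)
        have hadj' : (grid n).Adj p.val.2.1 q.val.2.2 := by rw [hx]; exact q.2
        have hy : p.val.2.2 = q.val.2.2 := by
          refine nbr_unique p.2 hadj' ?_ ?_
          · refine iff_of_false (fun hc' => not_both p.2 hc' hv) ?_
            exact fun hc' => not_both hadj' hc' (by rw [hx] at hv ⊢; exact hv')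
          · exact iff_of_true (by omega) (by omega)
        exact pair_ext hc hx hy
    have b2 : P2.ncard ≤ 2 := by
      refine ncard_le_two_of _ ?_
      rintro p ⟨hv, h1, h2⟩ q ⟨hv', h1', h2'⟩ hc
      have hx : p.val.2.1 = q.val.2.1 := tm_inj (by omega)
      have hadj' : (grid n).Adj p.val.2.1 q.val.2.2 := by rw [hx]; exact q.2
      have hy : p.val.2.2 = q.val.2.2 := by
        refine nbr_unique p.2 hadj' ?_ ?_
        · refine iff_of_false (fun hc' => not_both p.2 hc' hv) ?_
          exact fun hc' => not_both hadj' hc' (by rw [hx] at hv ⊢; exact hv')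
        · exact iff_of_false (by omega) (by omega)
      exact pair_ext hc hx hy
    have b3 : P3.ncard ≤ 2 := by
      refine ncard_le_two_of _ ?_
      rintro p ⟨hh, h1, h2⟩ q ⟨hh', h1', h2'⟩ hc
      have hx : p.val.2.1 = q.val.2.1 := tm_inj (by omega)
      have hadj' : (grid n).Adj p.val.2.1 q.val.2.2 := by rw [hx]; exact q.2
      have hy : p.val.2.2 = q.val.2.2 := by
        refine nbr_unique p.2 hadj' ?_ ?_
        · exact iff_of_true hh (by rw [hx]; exact hh')
        · exact iff_of_true (by omega) (by omega)
      exact pair_ext hc hx hy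
    have b4 : P4.ncard ≤ 2 := by
      refine ncard_le_two_of _ ?_
      rintro p ⟨hh, h1, h2⟩ q ⟨hh', h1', h2'⟩ hc
      have hx : p.val.2.1 = q.val.2.1 := tm_inj (by omega)
      have hadj' : (grid n).Adj p.val.2.1 q.val.2.2 := by rw [hx]; exact q.2
      have hy : p.val.2.2 = q.val.2.2 := by
        refine nbr_unique p.2 hadj' ?_ ?_
        · exact iff_of_true hh (by rw [hx]; exact hh')
        · exact iff_of_false (by omega) (by omega)
      exact pair_ext hc hx hy
    calc ({p : CFIPair (grid n) | cond i p.val}).ncard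
        ≤ (P1 ∪ (P2 ∪ (P3 ∪ P4))).ncard := Set.ncard_le_ncard hsub (Set.toFinite _)
      _ ≤ P1.ncard + (P2 ∪ (P3 ∪ P4)).ncard := Set.ncard_union_le _ _
      _ ≤ P1.ncard + (P2.ncard + (P3 ∪ P4).ncard) := by
          have := Set.ncard_union_le P2 (P3 ∪ P4); omega
      _ ≤ P1.ncard + (P2.ncard + (P3.ncard + P4.ncard)) := by
          have := Set.ncard_union_le P3 P4; omega
      _ ≤ 2 * n + 6 := by omega

lemma bag_card (hn : 2 ≤ n) (i : ℕ ⊕ CFIMid (grid n)) : (bag i).ncard ≤ 2 * n + 6 := by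
  cases i with
  | inl i =>
    have : (bag (Sum.inl i) : Set (CFIVert (grid n))).ncard
        = ({p : CFIPair (grid n) | cond i p.val}).ncard := by
      simp only [bag]
      exact Set.ncard_image_of_injective _ Sum.inl_injective
    rw [this]
    exact cond_card hn i
  | inr m =>
    have hs : ({p : CFIPair (grid n) | p.val.2.1 = m.val.1}).ncard ≤ 8 := by
      rw [← Nat.card_coe_set_eq]
      have hb : Nat.card (Bool × Bool × Bool) = 8 := by simp [Nat.card_eq_fintype_card]
      rw [← hb]
      refine Nat.card_le_card_of_injective (fun q => (q.1.val.1,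
        decide (q.1.val.2.1.1 = q.1.val.2.2.1),
        decide (tm q.1.val.2.2 < tm q.1.val.2.1))) ?_
      intro a b h
      have h1 : a.1.val.1 = b.1.val.1 := congrArg (fun z => z.1) h
      have h2 : decide (a.1.val.2.1.1 = a.1.val.2.2.1)
          = decide (b.1.val.2.1.1 = b.1.val.2.2.1) := congrArg (fun z => z.2.1) h
      have h3 : decide (tm a.1.val.2.2 < tm a.1.val.2.1)
          = decide (tm b.1.val.2.2 < tm b.1.val.2.1) := congrArg (fun z => z.2.2) h
      have hx : a.1.val.2.1 = b.1.val.2.1 := by rw [a.2, b.2]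
      rw [decide_eq_decide] at h2 h3
      rw [← hx] at h2 h3
      have hadj' : (grid n).Adj a.1.val.2.1 b.1.val.2.2 := by rw [hx]; exact b.1.2
      have hy : a.1.val.2.2 = b.1.val.2.2 := nbr_unique a.1.2 hadj' h2 h3
      exact Subtype.ext (pair_ext h1 hx hy)
    have himg : ((Sum.inl ''
        {p : CFIPair (grid n) | p.val.2.1 = m.val.1} : Set (CFIVert (grid n)))).ncard ≤ 8 := by
      rw [Set.ncard_image_of_injective _ Sum.inl_injective]; exact hs
    calc (bag (Sum.inr m) : Set (CFIVert (grid n))).ncard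
        ≤ (Sum.inl '' {p : CFIPair (grid n) | p.val.2.1 = m.val.1}
            : Set (CFIVert (grid n))).ncard + 1 := Set.ncard_insert_le _ _
      _ ≤ 2 * n + 6 := by omega

/-! ### Assembly -/

def theDecomp (n : ℕ) (T : Set (Sym2 (Fin n × Fin n))) :
    TreeDecomp (CFI (grid n) T) (ℕ ⊕ CFIMid (grid n)) where
  T := Tr att0
  tree := tr_isTree att0
  bag := CFIProof.bag
  bags_connected := bags_conn
  edge_subset := edge_cover T

end CFIProof

theorem stmt15 (n : ℕ) (hn : 2 ≤ n) :
    (∃ (ι : Type) (td : TreeDecomp (CFI (grid n) ∅) ι),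
      ∀ i, (td.bag i).ncard ≤ 2 * n + 6) ∧
    ∀ e ∈ (grid n).edgeSet,
      ∃ (ι : Type) (td : TreeDecomp (CFI (grid n) {e}) ι),
        ∀ i, (td.bag i).ncard ≤ 2 * n + 6 := by
  constructor
  · exact ⟨_, CFIProof.theDecomp n ∅, fun i => CFIProof.bag_card hn i⟩
  · intro e _
    exact ⟨_, CFIProof.theDecomp n {e}, fun i => CFIProof.bag_card hn i⟩
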